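/- Let A : ℝ → Matrix n n ℝ be a continuous real matrix-valued function and let Y : ℝ → Matrix n n ℝ satisfy Y'(s) = A(s) · Y(s) for all s and Y(0) = I. If ∫₀^t ‖A(τ)‖₂ dτ < π, then Y(t) has a real logarithm: there exists a real n×n matrix Ω with exp(Ω) = Y(t). -/

import Mathlib

attribute [local instance] Matrix.normedAddCommGroup Matrix.normedSpace

/-- The spectral norm of a real matrix: the operator norm of the associated linear map
between Euclidean spaces. -/
noncomputable def l2norm {n : Type*} [Fintype n] [DecidableEq n] (A : Matrix n n ℝ) : ℝ :=
  ‖Matrix.toEuclideanCLM (𝕜 := ℝ) A‖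

open scoped Topology
open Set Real intervalIntegral

/-- In a commutative real Banach algebra, an element `b` such that the segment from `1` to `b`
consists of units has a logarithm. -/
theorem exists_exp_eq_of_isUnit_segment {𝒜 : Type*} [NormedCommRing 𝒜] [NormedAlgebra ℝ 𝒜]
    [CompleteSpace 𝒜] (b : 𝒜) (hb : ∀ u ∈ Set.Icc (0:ℝ) 1, IsUnit (1 + u • (b - 1))) :
    ∃ ω : 𝒜, NormedSpace.exp ω = b := by
  set Δ : 𝒜 := b - 1 with hΔ
  set U : Set ℝ := {u : ℝ | IsUnit (1 + u • Δ)} with hU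
  have hUopen : IsOpen U := by
    have : U = (fun u : ℝ => 1 + u • Δ) ⁻¹' {x : 𝒜 | IsUnit x} := rfl
    rw [this]
    exact Units.isOpen.preimage (by continuity)
  have hIccU : Set.Icc (0:ℝ) 1 ⊆ U := hb
  set g : ℝ → 𝒜 := fun u => Δ * Ring.inverse (1 + u • Δ) with hg
  have hgcont : ContinuousOn g U := by
    intro u hu
    refine (ContinuousAt.continuousWithinAt ?_)
    have h1 : ContinuousAt (fun u : ℝ => 1 + u • Δ) u := by fun_prop
    have h2 : ContinuousAt Ring.inverse (1 + u • Δ) :=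
      NormedRing.inverse_continuousAt hu.unit
    have h3 : ContinuousAt (fun u : ℝ => Ring.inverse (1 + u • Δ)) u :=
      ContinuousAt.comp (g := Ring.inverse) (f := fun u : ℝ => 1 + u • Δ) h2 h1
    exact continuousAt_const.mul h3
  set Ω : ℝ → 𝒜 := fun r => ∫ u in (0:ℝ)..r, g u with hΩdef
  have hΩderiv : ∀ r ∈ Set.Icc (0:ℝ) 1, HasDerivAt Ω (g r) r := by
    intro r hr
    have hint : IntervalIntegrable g MeasureTheory.volume 0 r := by
      apply ContinuousOn.intervalIntegrable
      apply hgcont.mono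
      intro x hx
      apply hIccU
      rcases le_total (0:ℝ) r with h | h
      · simp only [Set.uIcc_of_le h] at hx
        exact ⟨hx.1, hx.2.trans hr.2⟩
      · simp only [Set.uIcc_of_ge h] at hx
        exact ⟨hr.1.trans hx.1, hx.2.trans (by norm_num)⟩
    have hmeas : StronglyMeasurableAtFilter g (𝓝 r) :=
      ContinuousOn.stronglyMeasurableAtFilter hUopen hgcont r (hIccU hr)
    exact intervalIntegral.integral_hasDerivAt_right hint hmeas
      ((hgcont.continuousAt (hUopen.mem_nhds (hIccU hr))))
  set F : ℝ → 𝒜 := fun r => NormedSpace.exp (-Ω r) * (1 + r • Δ) with hF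
  have hFderiv : ∀ r ∈ Set.Icc (0:ℝ) 1, HasDerivAt F 0 r := by
    intro r hr
    have h1 : HasDerivAt (fun r => -Ω r) (-(g r)) r := (hΩderiv r hr).neg
    have h2 : HasDerivAt (fun r => NormedSpace.exp (-Ω r))
        (NormedSpace.exp (-Ω r) * (-(g r))) r := by
      have := (hasFDerivAt_exp (𝕂 := ℝ) (x := -Ω r)).comp_hasDerivAt r h1
      simpa [smul_eq_mul, mul_comm, Function.comp_def] using this
    have h3 : HasDerivAt (fun r : ℝ => 1 + r • Δ) Δ r := by
      simpa using ((hasDerivAt_id r).smul_const Δ).const_add 1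
    have := h2.mul h3
    have hinv : Ring.inverse (1 + r • Δ) * (1 + r • Δ) = 1 :=
      Ring.inverse_mul_cancel _ (hIccU hr)
    have h4 : g r * (1 + r • Δ) = Δ := by
      calc g r * (1 + r • Δ) = Δ * (Ring.inverse (1 + r • Δ) * (1 + r • Δ)) := by
            rw [hg]; ring
        _ = Δ := by rw [hinv, mul_one]
    have hkey : NormedSpace.exp (-Ω r) * -g r * (1 + r • Δ)
        + NormedSpace.exp (-Ω r) * Δ = 0 := by
      calc NormedSpace.exp (-Ω r) * -g r * (1 + r • Δ) + NormedSpace.exp (-Ω r) * Δ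
          = NormedSpace.exp (-Ω r) * -(g r * (1 + r • Δ)) + NormedSpace.exp (-Ω r) * Δ := by
            ring
        _ = 0 := by rw [h4]; ring
    convert this using 1
    · rfl
    exact hkey.symm
  have hFcont : ContinuousOn F (Set.Icc (0:ℝ) 1) := fun r hr =>
    ((hFderiv r hr).continuousAt).continuousWithinAt
  have hconst : F 1 = F 0 := by
    have := constant_of_has_deriv_right_zero hFcont
      (fun r hr => ((hFderiv r ⟨hr.1, hr.2.le⟩).hasDerivWithinAt))
    exact this 1 (by norm_num)
  have hΩ0 : Ω 0 = 0 := by simp [hΩdef]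
  have hF0 : F 0 = 1 := by
    simp [hF, hΩ0, NormedSpace.exp_zero]
  have hF1 : NormedSpace.exp (-Ω 1) * b = 1 := by
    have hb1 : (1 : 𝒜) + (1:ℝ) • Δ = b := by rw [one_smul, hΔ]; ring
    have h := hconst.trans hF0
    simp only [hF] at h
    rwa [hb1] at h
  refine ⟨Ω 1, ?_⟩
  have hee : NormedSpace.exp (Ω 1) * NormedSpace.exp (-Ω 1) = 1 := by
    letI : NormedAlgebra ℚ 𝒜 := NormedAlgebra.restrictScalars ℚ ℝ 𝒜
    rw [← NormedSpace.exp_add, add_neg_cancel, NormedSpace.exp_zero]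
  calc NormedSpace.exp (Ω 1) = NormedSpace.exp (Ω 1) * (NormedSpace.exp (-Ω 1) * b) := by
        rw [hF1, mul_one]
    _ = (NormedSpace.exp (Ω 1) * NormedSpace.exp (-Ω 1)) * b := by ring
    _ = b := by rw [hee, one_mul]

/-- The map `M ↦ toEuclideanCLM M` as a linear map. -/
noncomputable def toECLM {n : Type*} [Fintype n] [DecidableEq n] :
    Matrix n n ℝ →ₗ[ℝ] (EuclideanSpace ℝ n →L[ℝ] EuclideanSpace ℝ n) where
  toFun := fun M => Matrix.toEuclideanCLM (𝕜 := ℝ) M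
  map_add' := fun M N => by simp
  map_smul' := fun c M => by simp

theorem toECLM_cont {n : Type*} [Fintype n] [DecidableEq n] :
    Continuous (fun M : Matrix n n ℝ => Matrix.toEuclideanCLM (𝕜 := ℝ) M) :=
  (toECLM (n := n)).continuous_of_finiteDimensional

/-- Backward-in-time vanishing propagation for linear ODEs. -/
theorem ode_nonvanishing {n : Type*} [Fintype n] [DecidableEq n]
    (A : ℝ → Matrix n n ℝ) (hA : Continuous A)
    {x : ℝ → EuclideanSpace ℝ n}
    (hx : ∀ s, HasDerivAt x (Matrix.toEuclideanCLM (𝕜 := ℝ) (A s) (x s)) s)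
    {t : ℝ} (ht : 0 ≤ t) {s₀ : ℝ} (hs₀ : s₀ ∈ Set.Icc 0 t) (h0 : x s₀ = 0) :
    x 0 = 0 := by
  -- a uniform Lipschitz bound on the compact interval
  have hk : Continuous fun s => ‖Matrix.toEuclideanCLM (𝕜 := ℝ) (A s)‖ :=
    continuous_norm.comp (toECLM_cont.comp hA)
  obtain ⟨C, hC⟩ := (isCompact_Icc (a := (0:ℝ)) (b := t)).exists_bound_of_continuousOn
    hk.continuousOn
  have hC0 : 0 ≤ C := le_trans (norm_nonneg _) (hC 0 ⟨le_refl 0, ht⟩)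
  set K : NNReal := ⟨C, hC0⟩ with hK
  set σ : ℝ → ℝ := fun s => ↑(Set.projIcc 0 t ht s) with hσ
  have hσmem : ∀ s, σ s ∈ Set.Icc 0 t := fun s => (Set.projIcc 0 t ht s).2
  set v : ℝ → EuclideanSpace ℝ n → EuclideanSpace ℝ n :=
    fun s y => Matrix.toEuclideanCLM (𝕜 := ℝ) (A (σ s)) y with hv
  have hlip : ∀ s, LipschitzOnWith K (v s) Set.univ := by
    intro s
    apply LipschitzWith.lipschitzOnWith
    apply (Matrix.toEuclideanCLM (𝕜 := ℝ) (A (σ s))).lipschitz.weaken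
    have h1 := hC (σ s) (hσmem s)
    rw [Real.norm_eq_abs] at h1
    rw [← NNReal.coe_le_coe, coe_nnnorm]
    exact (le_abs_self _).trans h1
  have heq : EqOn x 0 (Set.Icc 0 s₀) := by
    apply ODE_solution_unique_of_mem_Icc_left (fun s _ => hlip s)
    · exact fun s _ => (hx s).continuousAt.continuousWithinAt
    · intro τ hτ
      have hτmem : τ ∈ Set.Icc 0 t := ⟨hτ.1.le, hτ.2.trans hs₀.2⟩
      have : σ τ = τ := by
        rw [hσ]; exact congrArg _ (Set.projIcc_of_mem ht hτmem)
      have h := (hx τ).hasDerivWithinAt (s := Set.Iic τ)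
      show HasDerivWithinAt x ((Matrix.toEuclideanCLM (𝕜 := ℝ) (A (σ τ))) (x τ)) (Set.Iic τ) τ
      rw [this]
      exact h
    · exact fun _ _ => Set.mem_univ _
    · exact continuousOn_const
    · intro τ hτ
      refine (hasDerivWithinAt_const τ (Set.Iic τ) (0 : EuclideanSpace ℝ n)).congr_deriv ?_
      simp [hv]
    · exact fun _ _ => Set.mem_univ _
    · simpa using h0
  simpa using heq (Set.left_mem_Icc.mpr hs₀.1)

local notation "⟪" X ", " Y "⟫" => @inner ℝ _ _ X Y

set_option maxHeartbeats 1000000 in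
theorem sphere_key {n : Type*} [Fintype n] [DecidableEq n]
    (A : ℝ → Matrix n n ℝ) (hA : Continuous A)
    {x : ℝ → EuclideanSpace ℝ n}
    (hx : ∀ s, HasDerivAt x (Matrix.toEuclideanCLM (𝕜 := ℝ) (A s) (x s)) s)
    {t : ℝ} (ht : 0 < t)
    (hne : ∀ s ∈ Set.Icc 0 t, x s ≠ 0)
    (hint : (∫ τ in (0:ℝ)..t, l2norm (A τ)) < Real.pi)
    {μ : ℝ} (hμ : μ < 0) (hxt : x t = μ • x 0) : False := by
  have hxcont : Continuous x := continuous_iff_continuousAt.mpr fun s => (hx s).continuousAt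
  set a : ℝ → ℝ := fun s => l2norm (A s) with ha_def
  have ha : Continuous a := continuous_norm.comp (toECLM_cont.comp hA)
  have ha0 : ∀ s, 0 ≤ a s := fun s => norm_nonneg _
  set θ : ℝ → ℝ := fun s => ∫ τ in (0:ℝ)..s, a τ with hθ_def
  have hθd : ∀ s, HasDerivAt θ (a s) s := fun s => (ha.integral_hasStrictDerivAt 0 s).hasDerivAt
  have hθcont : Continuous θ := continuous_iff_continuousAt.mpr fun s => (hθd s).continuousAt
  have hθnn : ∀ s ∈ Set.Icc 0 t, 0 ≤ θ s := by
    intro s hs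
    exact intervalIntegral.integral_nonneg hs.1 (fun τ _ => ha0 τ)
  have hθmono : ∀ s ∈ Set.Icc 0 t, θ s ≤ θ t := by
    intro s hs
    apply intervalIntegral.integral_mono_interval (le_refl (0:ℝ)) hs.1 hs.2
    · filter_upwards with τ using ha0 τ
    · exact (ha.intervalIntegrable 0 t)
  have hθt : θ t < Real.pi := hint
  have hθt0 : 0 ≤ θ t := hθnn t ⟨ht.le, le_refl t⟩
  -- choice of ε
  set ε : ℝ := min ((Real.pi - θ t) / (2 * (1 + t))) 1 with hε_def
  have h1t : 0 < 1 + t := by linarith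
  have hε : 0 < ε := by
    apply lt_min
    · apply div_pos (by linarith) (by linarith)
    · norm_num
  have hεπ : θ t + ε * (1 + t) < Real.pi := by
    have h1 : ε ≤ (Real.pi - θ t) / (2 * (1 + t)) := min_le_left _ _
    have h2 : ε * (2 * (1 + t)) ≤ Real.pi - θ t := by
      rw [← le_div_iff₀ (by linarith : (0:ℝ) < 2 * (1 + t))]
      exact h1
    nlinarith
  set w : EuclideanSpace ℝ n := ‖x 0‖⁻¹ • x 0 with hw_def
  have hx0 : x 0 ≠ 0 := hne 0 ⟨le_refl 0, ht.le⟩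
  have hw : ‖w‖ = 1 := by
    rw [hw_def, norm_smul, norm_inv, norm_norm, inv_mul_cancel₀ (norm_ne_zero_iff.mpr hx0)]
  set c : ℝ → ℝ := fun s => ⟪w, x s⟫ with hc_def
  set r : ℝ → ℝ := fun s => ‖x s‖ with hr_def
  set ψ : ℝ → ℝ := fun s => θ s + ε * (1 + s) with hψ_def
  set D : ℝ → ℝ := fun s => c s - Real.cos (ψ s) * r s with hD_def
  have hccont : Continuous c := continuous_const.inner hxcont
  have hrcont : Continuous r := hxcont.norm
  have hψcont : Continuous ψ := by fun_prop
  have hDcont : Continuous D := by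
    apply hccont.sub ((Real.continuous_cos.comp hψcont).mul hrcont)
  have hrpos : ∀ s ∈ Set.Icc 0 t, 0 < r s := fun s hs => norm_pos_iff.mpr (hne s hs)
  have hc0 : c 0 = r 0 := by
    rw [hc_def, hw_def]
    simp only [real_inner_smul_left]
    rw [real_inner_self_eq_norm_mul_norm]
    rw [hr_def]
    field_simp
  have hψmem : ∀ s ∈ Set.Icc 0 t, 0 < ψ s ∧ ψ s < Real.pi := by
    intro s hs
    constructor
    · have := hθnn s hs
      have : 0 < ε * (1 + s) := mul_pos hε (by have := hs.1; linarith)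
      have := hθnn s hs
      simp only [hψ_def]
      linarith
    · have h1 := hθmono s hs
      have h2 : ε * (1 + s) ≤ ε * (1 + t) :=
        mul_le_mul_of_nonneg_left (by have := hs.2; linarith) hε.le
      simp only [hψ_def]
      linarith
  have hD0 : 0 < D 0 := by
    have hψ0 : ψ 0 = ε := by simp [hψ_def, hθ_def]
    have hcos : Real.cos (ψ 0) < 1 := by
      rw [hψ0, ← Real.cos_zero]
      apply Real.cos_lt_cos_of_nonneg_of_le_pi (le_refl 0) _ hε
      have : ε ≤ 1 := min_le_right _ _
      linarith [Real.pi_gt_three]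
    have := hrpos 0 ⟨le_refl 0, ht.le⟩
    simp only [hD_def]
    rw [hc0]
    nlinarith
  have hn0 : ‖x 0‖ ≠ 0 := norm_ne_zero_iff.mpr hx0
  have hct : c t = -(r t) := by
    have h1 : c t = μ * ‖x 0‖ := by
      simp only [hc_def]
      rw [hxt, real_inner_smul_right, hw_def, real_inner_smul_left,
        real_inner_self_eq_norm_mul_norm]
      field_simp
    have h2 : r t = -μ * ‖x 0‖ := by
      simp only [hr_def]
      rw [hxt, norm_smul, Real.norm_eq_abs, abs_of_neg hμ]
    rw [h1, h2]; ring
  have hDt : D t ≤ 0 := by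
    have h1 : -1 ≤ Real.cos (ψ t) := Real.neg_one_le_cos (ψ t)
    have h2 := (hrpos t ⟨ht.le, le_refl t⟩).le
    simp only [hD_def]
    rw [hct]
    nlinarith
  -- first zero of D
  set S : Set ℝ := {s | s ∈ Set.Icc 0 t ∧ D s ≤ 0} with hS_def
  have hSclosed : IsClosed S := by
    apply IsClosed.inter isClosed_Icc
    exact isClosed_le hDcont continuous_const
  have hSne : S.Nonempty := ⟨t, ⟨ht.le, le_refl t⟩, hDt⟩
  have hSbdd : BddBelow S := ⟨0, fun s hs => hs.1.1⟩
  set s₁ : ℝ := sInf S with hs₁_def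
  have hs₁S : s₁ ∈ S := hSclosed.csInf_mem hSne hSbdd
  have hs₁Icc : s₁ ∈ Set.Icc 0 t := hs₁S.1
  have hs₁pos : 0 < s₁ := by
    rcases lt_or_eq_of_le hs₁Icc.1 with h | h
    · exact h
    · exfalso; rw [← h] at hs₁S; linarith [hs₁S.2, hD0]
  have hbefore : ∀ s, 0 ≤ s → s < s₁ → 0 < D s := by
    intro s hs0 hss₁
    by_contra hcon
    push_neg at hcon
    have : s ∈ S := ⟨⟨hs0, hss₁.le.trans hs₁Icc.2⟩, hcon⟩
    exact absurd (csInf_le hSbdd this) (not_le.mpr hss₁)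
  have hDs₁ : D s₁ = 0 := by
    refine le_antisymm hs₁S.2 ?_
    have htend : Filter.Tendsto D (nhdsWithin s₁ (Set.Iio s₁)) (nhds (D s₁)) :=
      (hDcont.continuousAt).continuousWithinAt
    apply ge_of_tendsto htend
    have hmem : Set.Ioo 0 s₁ ∈ nhdsWithin s₁ (Set.Iio s₁) :=
      Ioo_mem_nhdsLT_of_mem ⟨hs₁pos, le_refl s₁⟩
    filter_upwards [hmem] with s hs
    exact (hbefore s hs.1.le hs.2).le
  -- derivative of D at s₁
  set x' : EuclideanSpace ℝ n := Matrix.toEuclideanCLM (𝕜 := ℝ) (A s₁) (x s₁) with hx'_def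
  have hxs₁ : x s₁ ≠ 0 := hne s₁ hs₁Icc
  have hrs₁ : 0 < r s₁ := hrpos s₁ hs₁Icc
  have hcd : HasDerivAt c ⟪w, x'⟫ s₁ := by
    have := (hasDerivAt_const s₁ w).inner ℝ (hx s₁)
    simpa using this
  have hqd : HasDerivAt (fun s => ⟪x s, x s⟫) (2 * ⟪x s₁, x'⟫) s₁ := by
    have := (hx s₁).inner ℝ (hx s₁)
    have h2 : ⟪x s₁, x'⟫ + ⟪x', x s₁⟫ = 2 * ⟪x s₁, x'⟫ := by
      rw [real_inner_comm x' (x s₁)]; ring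
    rwa [h2] at this
  have hq0 : ⟪x s₁, x s₁⟫ ≠ (0:ℝ) := by
    rw [real_inner_self_eq_norm_mul_norm]
    positivity
  have hsqrt_q : ∀ s, Real.sqrt ⟪x s, x s⟫ = r s := by
    intro s
    rw [real_inner_self_eq_norm_mul_norm, Real.sqrt_mul_self (norm_nonneg _)]
  have hrd : HasDerivAt r (⟪x s₁, x'⟫ / r s₁) s₁ := by
    have h1 : HasDerivAt (fun s => Real.sqrt ⟪x s, x s⟫)
        (1 / (2 * Real.sqrt ⟪x s₁, x s₁⟫) * (2 * ⟪x s₁, x'⟫)) s₁ :=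
      (Real.hasDerivAt_sqrt hq0).comp s₁ hqd
    have h2 : (fun s => Real.sqrt ⟪x s, x s⟫) = r := funext hsqrt_q
    rw [h2, hsqrt_q] at h1
    convert h1 using 1
    field_simp
  have hψd : HasDerivAt ψ (a s₁ + ε) s₁ := by
    have h1 : HasDerivAt (fun s : ℝ => ε * (1 + s)) ε s₁ := by
      simpa using (((hasDerivAt_id s₁).const_add (1:ℝ)).const_mul ε)
    exact (hθd s₁).add h1
  have hcosd : HasDerivAt (fun s => Real.cos (ψ s)) (-Real.sin (ψ s₁) * (a s₁ + ε)) s₁ :=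
    (Real.hasDerivAt_cos (ψ s₁)).comp s₁ hψd
  set d : ℝ := ⟪w, x'⟫ - (-Real.sin (ψ s₁) * (a s₁ + ε) * r s₁
      + Real.cos (ψ s₁) * (⟪x s₁, x'⟫ / r s₁)) with hd_def
  have hDd : HasDerivAt D d s₁ := hcd.sub (hcosd.mul hrd)
  -- positivity of d
  have hψ₁ := hψmem s₁ hs₁Icc
  have hsin : 0 < Real.sin (ψ s₁) := Real.sin_pos_of_pos_of_lt_pi hψ₁.1 hψ₁.2
  set h : ℝ := Real.cos (ψ s₁) with hh_def
  have hch : c s₁ = h * r s₁ := by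
    have := hDs₁
    simp only [hD_def] at this
    linarith
  set u : EuclideanSpace ℝ n := (r s₁)⁻¹ • x s₁ with hu_def
  have hwu : ⟪w, u⟫ = h := by
    rw [hu_def, real_inner_smul_right]
    have : ⟪w, x s₁⟫ = c s₁ := rfl
    rw [this, hch]
    field_simp
  have huu : ⟪u, u⟫ = (1:ℝ) := by
    rw [hu_def, real_inner_smul_right, real_inner_smul_left,
      real_inner_self_eq_norm_mul_norm]
    have : ‖x s₁‖ = r s₁ := rfl
    rw [this]
    field_simp
  have hww : ⟪w, w⟫ = (1:ℝ) := by
    rw [real_inner_self_eq_norm_mul_norm, hw]; norm_num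
  have hu_norm : ‖u‖ = 1 := by
    have h1 := huu
    rw [real_inner_self_eq_norm_mul_norm] at h1
    nlinarith [norm_nonneg u]
  have hnorm_whu : ‖w - h • u‖^2 = 1 - h^2 := by
    have h1 : ‖h • u‖ ^ 2 = h ^ 2 := by
      rw [norm_smul, hu_norm, mul_one, Real.norm_eq_abs, sq_abs]
    rw [norm_sub_sq_real, real_inner_smul_right, hwu, h1, hw]
    ring
  have hinner_eq : ⟪w, x'⟫ - h * (⟪x s₁, x'⟫ / r s₁) = ⟪w - h • u, x'⟫ := by
    rw [inner_sub_left, real_inner_smul_left, hu_def, real_inner_smul_left,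
      real_inner_smul_left]
    ring
  have hx'bound : ‖x'‖ ≤ a s₁ * r s₁ := by
    rw [hx'_def]
    exact (Matrix.toEuclideanCLM (𝕜 := ℝ) (A s₁)).le_opNorm (x s₁)
  have hsqrt : Real.sqrt (1 - h^2) = Real.sin (ψ s₁) := by
    rw [hh_def]
    rw [show (1:ℝ) - Real.cos (ψ s₁)^2 = Real.sin (ψ s₁)^2 by
      have := Real.sin_sq_add_cos_sq (ψ s₁); linarith]
    exact Real.sqrt_sq hsin.le
  have hinner_bound : |⟪w - h • u, x'⟫| ≤ Real.sin (ψ s₁) * (a s₁ * r s₁) := by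
    have h1 : |⟪w - h • u, x'⟫| ≤ ‖w - h • u‖ * ‖x'‖ := abs_real_inner_le_norm _ _
    have h2 : ‖w - h • u‖ = Real.sin (ψ s₁) := by
      rw [← hsqrt, ← hnorm_whu, Real.sqrt_sq (norm_nonneg _)]
    rw [h2] at h1
    calc |⟪w - h • u, x'⟫| ≤ Real.sin (ψ s₁) * ‖x'‖ := h1
      _ ≤ Real.sin (ψ s₁) * (a s₁ * r s₁) :=
        mul_le_mul_of_nonneg_left hx'bound hsin.le
  have hdpos : 0 < d := by
    have h1 : d = (⟪w, x'⟫ - h * (⟪x s₁, x'⟫ / r s₁)) + Real.sin (ψ s₁) * (a s₁ + ε) * r s₁ := by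
      rw [hd_def, hh_def]; ring
    rw [h1, hinner_eq]
    have h2 : -(Real.sin (ψ s₁) * (a s₁ * r s₁)) ≤ ⟪w - h • u, x'⟫ := neg_le_of_abs_le hinner_bound
    have h3 : Real.sin (ψ s₁) * (a s₁ + ε) * r s₁
        = Real.sin (ψ s₁) * (a s₁ * r s₁) + Real.sin (ψ s₁) * ε * r s₁ := by ring
    have h4 : 0 < Real.sin (ψ s₁) * ε * r s₁ := by positivity
    linarith
  -- but the derivative must be ≤ 0
  have hdnonpos : d ≤ 0 := by
    have hslope := hasDerivAt_iff_tendsto_slope.mp hDd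
    have hslope' : Filter.Tendsto (slope D s₁) (nhdsWithin s₁ (Set.Iio s₁)) (nhds d) := by
      apply hslope.mono_left
      apply nhdsWithin_mono
      intro s hs
      simp only [Set.mem_compl_iff, Set.mem_singleton_iff]
      exact ne_of_lt hs
    apply le_of_tendsto hslope'
    have hmem : Set.Ioo 0 s₁ ∈ nhdsWithin s₁ (Set.Iio s₁) :=
      Ioo_mem_nhdsLT_of_mem ⟨hs₁pos, le_refl s₁⟩
    filter_upwards [hmem] with s hs
    have hDs : 0 < D s := hbefore s hs.1.le hs.2
    have hss : s - s₁ < 0 := by linarith [hs.2]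
    rw [slope_def_field, hDs₁]
    apply div_nonpos_iff.mpr
    left
    constructor
    · linarith
    · linarith
  linarith

/-- Matrix-vector multiplication into Euclidean space, as a linear map. -/
noncomputable def mulVecLin' {n : Type*} [Fintype n] [DecidableEq n] (v : n → ℝ) :
    Matrix n n ℝ →ₗ[ℝ] EuclideanSpace ℝ n where
  toFun := fun M => (WithLp.equiv 2 (n → ℝ)).symm (M.mulVec v)
  map_add' := fun M N => by
    ext i
    simp [Matrix.add_mulVec]
  map_smul' := fun c M => by
    ext i
    simp [Matrix.smul_mulVec]

theorem no_nonpos_real_eigen {n : Type*} [Fintype n] [DecidableEq n]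
    (A : ℝ → Matrix n n ℝ) (hA : Continuous A)
    (Y : ℝ → Matrix n n ℝ)
    (hY : ∀ s : ℝ, HasDerivAt Y (A s * Y s) s) (hY0 : Y 0 = 1)
    (t : ℝ) (ht : 0 < t)
    (hint : (∫ τ in (0:ℝ)..t, l2norm (A τ)) < Real.pi)
    (v : n → ℝ) (hv : v ≠ 0) (μ : ℝ) (hμ : μ ≤ 0) (heig : (Y t).mulVec v = μ • v) :
    False := by
  set e := (WithLp.equiv 2 (n → ℝ)).symm with he_def
  set x : ℝ → EuclideanSpace ℝ n := fun s => e ((Y s).mulVec v) with hx_def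
  set L : Matrix n n ℝ →L[ℝ] EuclideanSpace ℝ n :=
    LinearMap.toContinuousLinearMap (mulVecLin' v) with hL_def
  have hxd : ∀ s, HasDerivAt x (Matrix.toEuclideanCLM (𝕜 := ℝ) (A s) (x s)) s := by
    intro s
    have h1 : HasDerivAt (fun s => L (Y s)) (L (A s * Y s)) s :=
      L.hasFDerivAt.comp_hasDerivAt s (hY s)
    have h2 : L (A s * Y s) = Matrix.toEuclideanCLM (𝕜 := ℝ) (A s) (x s) := by
      show e ((A s * Y s).mulVec v) = _
      rw [← Matrix.mulVec_mulVec]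
      rw [hx_def, he_def]
      rw [Matrix.toEuclideanCLM_toLp]
      rfl
    rw [← h2]
    exact h1
  have hx0 : x 0 = e v := by
    simp only [hx_def]
    rw [hY0, Matrix.one_mulVec]
  have hx0ne : x 0 ≠ 0 := by
    rw [hx0]
    intro hcon
    apply hv
    have : e v = e 0 := hcon.trans (by simp [he_def])
    exact (WithLp.equiv 2 (n → ℝ)).symm.injective this
  have hne : ∀ s ∈ Set.Icc 0 t, x s ≠ 0 := by
    intro s hs hcon
    exact hx0ne (ode_nonvanishing A hA hxd ht.le hs hcon)
  rcases lt_or_eq_of_le hμ with hμlt | hμ0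
  · -- negative eigenvalue: sphere argument
    have hxt : x t = μ • x 0 := by
      simp only [hx_def]
      rw [heig, hY0, Matrix.one_mulVec]
      ext i
      simp [he_def]
    exact sphere_key A hA hxd ht hne hint hμlt hxt
  · -- zero eigenvalue: contradicts nonvanishing
    apply hne t ⟨ht.le, le_refl t⟩
    simp only [hx_def]
    rw [heig, hμ0]
    ext i
    simp [he_def]

theorem segment_isUnit {n : Type*} [Fintype n] [DecidableEq n]
    (A : ℝ → Matrix n n ℝ) (hA : Continuous A)
    (Y : ℝ → Matrix n n ℝ)
    (hY : ∀ s : ℝ, HasDerivAt Y (A s * Y s) s) (hY0 : Y 0 = 1)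
    (t : ℝ) (ht : 0 < t)
    (hint : (∫ τ in (0:ℝ)..t, l2norm (A τ)) < Real.pi) :
    ∀ u ∈ Set.Icc (0:ℝ) 1, IsUnit ((1 : Matrix n n ℝ) + u • (Y t - 1)) := by
  intro u hu
  by_contra hcon
  have hdet : ((1 : Matrix n n ℝ) + u • (Y t - 1)).det = 0 := by
    by_contra hdet
    exact hcon ((Matrix.isUnit_iff_isUnit_det _).mpr (isUnit_iff_ne_zero.mpr hdet))
  obtain ⟨v, hv, hker⟩ := (Matrix.exists_mulVec_eq_zero_iff).mpr hdet
  rcases eq_or_lt_of_le hu.1 with hu0 | hu0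
  · -- u = 0 : the matrix is 1
    rw [← hu0] at hker
    simp [Matrix.one_mulVec] at hker
    exact hv hker
  · -- u > 0
    have hker' : (Y t).mulVec v = (-(1 - u) / u) • v := by
      have h1 : ((1 : Matrix n n ℝ) + u • (Y t - 1)).mulVec v
          = (1 - u) • v + u • (Y t).mulVec v := by
        rw [Matrix.add_mulVec, Matrix.one_mulVec]
        rw [Matrix.smul_mulVec, Matrix.sub_mulVec, Matrix.one_mulVec]
        ext i
        simp [smul_sub]
        ring
      rw [h1] at hker
      have h2 : u • (Y t).mulVec v = -((1 - u) • v) :=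
        eq_neg_of_add_eq_zero_right hker
      have h3 : (Y t).mulVec v = u⁻¹ • (-((1 - u) • v)) := by
        rw [← h2, smul_smul, inv_mul_cancel₀ (ne_of_gt hu0), one_smul]
      rw [h3, ← neg_smul, smul_smul]
      congr 1
      field_simp
    have hμ : -(1 - u) / u ≤ 0 := by
      apply div_nonpos_iff.mpr
      right
      constructor
      · have := hu.2; linarith
      · exact hu.1
    exact no_nonpos_real_eigen A hA Y hY hY0 t ht hint v hv _ hμ hker'

set_option synthInstance.maxHeartbeats 1000000 in
set_option maxHeartbeats 2000000 in
/-- A real square matrix `B` such that the whole segment from `1` to `B` consists of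
invertible matrices has a real logarithm. -/
theorem matrix_exists_exp_eq {n : Type*} [Fintype n] [DecidableEq n] (B : Matrix n n ℝ)
    (hB : ∀ u ∈ Set.Icc (0:ℝ) 1, IsUnit ((1 : Matrix n n ℝ) + u • (B - 1))) :
    ∃ Ω : Matrix n n ℝ, NormedSpace.exp Ω = B := by
  letI : NormedRing (Matrix n n ℝ) := Matrix.linftyOpNormedRing
  letI : NormedAlgebra ℝ (Matrix n n ℝ) := Matrix.linftyOpNormedAlgebra
  set 𝒜 : Subalgebra ℝ (Matrix n n ℝ) := Algebra.adjoin ℝ {B} with h𝒜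
  letI : NormedCommRing 𝒜 := { (inferInstance : NormedRing 𝒜) with mul_comm :=
    (Algebra.adjoinCommRingOfComm ℝ
    (fun a ha b hb => by
      rw [Set.mem_singleton_iff] at ha hb; subst ha; subst hb; rfl)).mul_comm }
  haveI : FiniteDimensional ℝ 𝒜 :=
    FiniteDimensional.of_injective (𝒜.val.toLinearMap) Subtype.val_injective
  haveI : @CompleteSpace 𝒜 PseudoMetricSpace.toUniformSpace := by
    haveI := FiniteDimensional.proper ℝ 𝒜; exact complete_of_proper
  -- units transfer
  have hunit : ∀ x : 𝒜, IsUnit (x : Matrix n n ℝ) → IsUnit x := by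
    intro x hx
    have hinj : Function.Injective (LinearMap.mulLeft (R := ℝ) (A := 𝒜) x) := by
      intro y z hyz
      have h1 : (x : Matrix n n ℝ) * y = (x : Matrix n n ℝ) * z := by
        have := congrArg (Subtype.val) hyz
        simpa [LinearMap.mulLeft_apply] using this
      have h2 : (y : Matrix n n ℝ) = z := by
        obtain ⟨u, hu⟩ := hx
        calc (y : Matrix n n ℝ) = (↑u⁻¹ * ↑u) * y := by rw [Units.inv_mul, one_mul]
          _ = ↑u⁻¹ * ((x : Matrix n n ℝ) * y) := by rw [hu, mul_assoc]
          _ = ↑u⁻¹ * ((x : Matrix n n ℝ) * z) := by rw [h1]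
          _ = (↑u⁻¹ * ↑u) * z := by rw [hu, mul_assoc]
          _ = z := by rw [Units.inv_mul, one_mul]
      exact Subtype.ext h2
    have hsurj : Function.Surjective (LinearMap.mulLeft (R := ℝ) (A := 𝒜) x) :=
      (LinearMap.injective_iff_surjective).mp hinj
    obtain ⟨y, hy⟩ := hsurj 1
    exact IsUnit.of_mul_eq_one y (by simpa [LinearMap.mulLeft_apply] using hy)
  set b : 𝒜 := ⟨B, Algebra.self_mem_adjoin_singleton ℝ B⟩ with hbdef
  have hseg : ∀ u ∈ Set.Icc (0:ℝ) 1, IsUnit (1 + u • (b - 1)) := by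
    intro u hu
    apply hunit
    have : ((1 + u • (b - 1) : 𝒜) : Matrix n n ℝ) = 1 + u • (B - 1) := by
      push_cast
      rfl
    rw [this]
    exact hB u hu
  obtain ⟨ω, hω⟩ := exists_exp_eq_of_isUnit_segment b hseg
  refine ⟨(ω : Matrix n n ℝ), ?_⟩
  have hcont : Continuous (𝒜.val) := continuous_subtype_val
  letI : NormedAlgebra ℚ 𝒜 := NormedAlgebra.restrictScalars ℚ ℝ 𝒜
  have h2 := NormedSpace.map_exp (𝒜.val) hcont ω
  rw [hω] at h2
  exact h2.symm


/-- **Theorem 2 (existence of a real logarithm).**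
If `Y` is the fundamental solution of `Y' = A(t) Y`, `Y(0) = I`, with `A` real and continuous,
and `∫₀^t ‖A(τ)‖₂ dτ < π`, then `Y(t)` has a real logarithm. -/
theorem magnus_stmt2 {n : Type*} [Fintype n] [DecidableEq n]
    (A : ℝ → Matrix n n ℝ) (hA : Continuous A)
    (Y : ℝ → Matrix n n ℝ)
    (hY : ∀ s : ℝ, HasDerivAt Y (A s * Y s) s) (hY0 : Y 0 = 1)
    (t : ℝ) (ht : 0 < t)
    (hint : (∫ τ in (0:ℝ)..t, l2norm (A τ)) < Real.pi) :
    ∃ Ω : Matrix n n ℝ, NormedSpace.exp Ω = Y t := by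
  exact matrix_exists_exp_eq (Y t) (segment_isUnit A hA Y hY hY0 t ht hint)
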